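/- Let H be Hermitian on ℂ^d with nontrivial variance, and consider the trivially extended Hamiltonian H ⊗ I_n on ℂ^d ⊗ ℂ^n with state ϱ ⊗ I_n/n. Then the inverse temperature is unchanged: Cov_{dn}(H⊗I, −log(ϱ⊗I/n)) / Δ²_{dn}(H⊗I) = Cov_d(H, −log ϱ) / Δ²_d(H), where Cov_m and Δ²_m denote covariance and variance with respect to the maximally mixed state on the m-dimensional space. -/

import Mathlib

open Matrix
open scoped ComplexOrder Kronecker

/-- Covariance of two matrices with respect to the maximally mixed state. -/
noncomputable def mCov {m : Type*} [Fintype m] (X Y : Matrix m m ℂ) : ℂ :=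
  (X * Y).trace / (Fintype.card m) - X.trace * Y.trace / ((Fintype.card m : ℂ)) ^ 2

/-- Variance of a matrix with respect to the maximally mixed state. -/
noncomputable def mVar {m : Type*} [Fintype m] (H : Matrix m m ℂ) : ℂ :=
  (H * H).trace / (Fintype.card m) - (H.trace / (Fintype.card m)) ^ 2

/-- The inverse temperature `Cov(H, −log ϱ)/Δ²H` is invariant under trivially extending
the system by a maximally mixed ancilla: for `H ⊗ I` and `ϱ ⊗ I/n`, whose logarithm is
`(log ϱ) ⊗ I − (log n)·I`, the ratio is unchanged. -/
theorem inverse_temperature_trivial_extension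
    {d n : ℕ} (hd : 0 < d) (hn : 0 < n)
    (H : Matrix (Fin d) (Fin d) ℂ) (hH : H.IsHermitian) (hvar : mVar H ≠ 0)
    (ϱ : Matrix (Fin d) (Fin d) ℂ) (hϱ : ϱ.PosDef) (hϱtr : ϱ.trace = 1)
    (L : Matrix (Fin d) (Fin d) ℂ) (hL : L.IsHermitian)
    (hexp : NormedSpace.exp L = ϱ)
    (L' : Matrix (Fin d × Fin n) (Fin d × Fin n) ℂ)
    (hL' : L' = Matrix.kroneckerMap (· * ·) L (1 : Matrix (Fin n) (Fin n) ℂ) -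
      ((Real.log n : ℝ) : ℂ) • (1 : Matrix (Fin d × Fin n) (Fin d × Fin n) ℂ)) :
    mCov (Matrix.kroneckerMap (· * ·) H (1 : Matrix (Fin n) (Fin n) ℂ)) (-L') /
        mVar (Matrix.kroneckerMap (· * ·) H (1 : Matrix (Fin n) (Fin n) ℂ)) =
      mCov H (-L) / mVar H := by
  subst hL'
  have hn' : (n:ℂ) ≠ 0 := Nat.cast_ne_zero.mpr hn.ne'
  have hd' : (d:ℂ) ≠ 0 := Nat.cast_ne_zero.mpr hd.ne'
  have hcard : (Fintype.card (Fin d × Fin n) : ℂ) = (d:ℂ) * n := by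
    simp [Fintype.card_prod]
  have htr1 : (1 : Matrix (Fin n) (Fin n) ℂ).trace = (n:ℂ) := by simp
  have hV : mVar (Matrix.kroneckerMap (· * ·) H (1 : Matrix (Fin n) (Fin n) ℂ)) = mVar H := by
    unfold mVar
    rw [show Matrix.kroneckerMap (· * ·) H 1 = H ⊗ₖ (1 : Matrix (Fin n) (Fin n) ℂ) from rfl,
      ← Matrix.mul_kronecker_mul, Matrix.trace_kronecker, Matrix.trace_kronecker, htr1,
      Matrix.one_mul, hcard]
    simp only [htr1, Fintype.card_fin]
    field_simp
  have hC : mCov (Matrix.kroneckerMap (· * ·) H (1 : Matrix (Fin n) (Fin n) ℂ))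
      (-(Matrix.kroneckerMap (· * ·) L (1 : Matrix (Fin n) (Fin n) ℂ) -
        ((Real.log n : ℝ) : ℂ) • (1 : Matrix (Fin d × Fin n) (Fin d × Fin n) ℂ)))
      = mCov H (-L) := by
    unfold mCov
    rw [show Matrix.kroneckerMap (· * ·) H 1 = H ⊗ₖ (1 : Matrix (Fin n) (Fin n) ℂ) from rfl,
      show Matrix.kroneckerMap (· * ·) L 1 = L ⊗ₖ (1 : Matrix (Fin n) (Fin n) ℂ) from rfl]
    simp only [Matrix.mul_neg, Matrix.mul_sub, Matrix.mul_smul, Matrix.mul_one,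
      Matrix.trace_neg, Matrix.trace_sub, Matrix.trace_smul, ← Matrix.mul_kronecker_mul,
      Matrix.trace_kronecker, htr1, Matrix.trace_one, hcard, Fintype.card_prod,
      Fintype.card_fin, smul_eq_mul]
    push_cast
    field_simp
    ring
  rw [hV, hC]
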